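/- Let p be an odd prime, F a finite field of characteristic p with q = |F| elements, Tr : F → ZMod p the field trace, and ζ = exp(2πi/p) ∈ ℂ. On V = F × F define, for v = (v₁,v₂), the Weyl operator W v as the q×q complex matrix indexed by F with entries (W v)_{x,y} = ζ^{Tr(v₂·(x − 2⁻¹·v₁))} if y = x − v₁ and 0 otherwise, where 2⁻¹ is the inverse of 2 in F and the exponent is taken via the canonical lift of ZMod p to ℕ. Let T be a positive semidefinite q×q complex matrix with Tr T = 1, and define G_T(v) = (1/q) • (W v · T · (W v)ᴴ) for v ∈ V, and for a one-dimensional F-subspace L ⊆ V define the L-marginal G_T^L(v) = Σ_{l ∈ L} G_T(v + l). Then for any two distinct one-dimensional F-subspaces L ≠ L' of V and all v, w ∈ V: Tr(G_T^L(v) · G_T^{L'}(w)) = 1/q. (That is, the q+1 marginal POVMs {G_T^L} of the covariant phase-space observable G_T are pairwise mutually unbiased.) -/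

import Mathlib

open Matrix
open scoped Classical ComplexOrder

/-- The trace of a finite field `F` of characteristic `p` over its prime field `ZMod p`. -/
noncomputable def zmodTrace (p : ℕ) [Fact p.Prime] (F : Type*) [Field F] [Fintype F]
    [CharP F p] (x : F) : ZMod p :=
  letI : Algebra (ZMod p) F := ZMod.algebra F p
  Algebra.trace (ZMod p) F x

/-- The Weyl operator `W v` on `ℓ²(F)` associated with the phase-space point
`v = (v₁, v₂) ∈ F × F`:  `(W v) f (x) = ζ^Tr(v₂(x − 2⁻¹v₁)) f(x − v₁)` where
`ζ = exp(2πi/p)`. -/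
noncomputable def weyl (p : ℕ) [Fact p.Prime] (F : Type*) [Field F] [Fintype F]
    [DecidableEq F] [CharP F p] (v : F × F) : Matrix F F ℂ :=
  Matrix.of fun x y =>
    if y = x - v.1 then
      Complex.exp (2 * (Real.pi : ℂ) * Complex.I / (p : ℂ)) ^
        (zmodTrace p F (v.2 * (x - (2 : F)⁻¹ * v.1))).val
    else 0

/-- The covariant phase-space observable generated by `T`:
`G_T(v) = (1/q) • W v · T · (W v)ᴴ`. -/
noncomputable def phaseObs (p : ℕ) [Fact p.Prime] (F : Type*) [Field F] [Fintype F]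
    [DecidableEq F] [CharP F p] (T : Matrix F F ℂ) (v : F × F) : Matrix F F ℂ :=
  ((1 : ℂ) / (Fintype.card F : ℂ)) • (weyl p F v * T * (weyl p F v)ᴴ)

/-- The `L`-marginal of the covariant phase-space observable `G_T`:
`G_T^L(v) = Σ_{l ∈ L} G_T(v + l)`. -/
noncomputable def phaseObsMarginal (p : ℕ) [Fact p.Prime] (F : Type*) [Field F] [Fintype F]
    [DecidableEq F] [CharP F p] (T : Matrix F F ℂ) (L : Submodule F (F × F)) (v : F × F) :
    Matrix F F ℂ :=
  ∑ l : F × F, if l ∈ L then phaseObs p F T (v + l) else 0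

section Aux

set_option linter.unusedSectionVars false

variable (p : ℕ) [Fact p.Prime] (F : Type*) [Field F] [Fintype F] [DecidableEq F] [CharP F p]

lemma zeta_pow_p : Complex.exp (2 * (Real.pi : ℂ) * Complex.I / (p : ℂ)) ^ p = 1 := by
  have hp : (p : ℂ) ≠ 0 := Nat.cast_ne_zero.mpr (Fact.out : p.Prime).ne_zero
  rw [← Complex.exp_nat_mul, mul_comm, div_mul_cancel₀ _ hp]
  exact Complex.exp_two_pi_mul_I

/-- The additive character `a ↦ ζ^a.val` of `ZMod p`. -/
noncomputable def eChar : AddChar (ZMod p) ℂ :=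
  haveI : NeZero p := ⟨(Fact.out : p.Prime).ne_zero⟩
  AddChar.zmodChar p (zeta_pow_p p)

lemma eChar_apply (a : ZMod p) :
    eChar p a = Complex.exp (2 * (Real.pi : ℂ) * Complex.I / (p : ℂ)) ^ a.val := rfl

lemma eChar_neg (a : ZMod p) : eChar p (-a) = (eChar p a)⁻¹ := by
  have h := (eChar p).map_add_eq_mul (-a) a
  rw [neg_add_cancel, AddChar.map_zero_eq_one] at h
  exact eq_inv_of_mul_eq_one_left h.symm

lemma eChar_star (a : ZMod p) : star (eChar p a) = eChar p (-a) := by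
  rw [eChar_neg]
  show star (eChar p a) = (eChar p a)⁻¹
  rw [eChar_apply, ← inv_pow, star_pow]
  congr 1
  rw [Complex.star_def, ← Complex.exp_conj, ← Complex.exp_neg]
  congr 1
  simp [map_div₀, map_ofNat]
  ring

lemma eChar_ne_one {a : ZMod p} (ha : a ≠ 0) : eChar p a ≠ 1 := by
  haveI : NeZero p := ⟨(Fact.out : p.Prime).ne_zero⟩
  have hprim := Complex.isPrimitiveRoot_exp p (Fact.out : p.Prime).ne_zero
  rw [eChar_apply]
  exact hprim.pow_ne_one_of_pos_of_lt
    (Nat.pos_of_ne_zero fun h => ha (by rwa [← ZMod.val_eq_zero])).ne' (ZMod.val_lt a)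

lemma zmodTrace_add (x y : F) :
    zmodTrace p F (x + y) = zmodTrace p F x + zmodTrace p F y := by
  unfold zmodTrace; exact map_add _ x y

lemma zmodTrace_zero : zmodTrace p F 0 = 0 := by
  unfold zmodTrace; exact map_zero _

lemma zmodTrace_neg (x : F) : zmodTrace p F (-x) = - zmodTrace p F x := by
  unfold zmodTrace; exact map_neg _ x

/-- Character-sum orthogonality for the composed character `s ↦ eChar (Tr (s t))`. -/
lemma sum_eChar_trace (t : F) :
    ∑ s : F, eChar p (zmodTrace p F (s * t)) =
      if t = 0 then (Fintype.card F : ℂ) else 0 := by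
  split_ifs with ht
  · subst ht
    simp [zmodTrace_zero, AddChar.map_zero_eq_one, Finset.card_univ]
  · set ψ : AddChar F ℂ :=
      (eChar p).compAddMonoidHom
        { toFun := zmodTrace p F, map_zero' := zmodTrace_zero p F,
          map_add' := zmodTrace_add p F } with hψ
    have key : ∑ s : F, ψ s = 0 := by
      rw [AddChar.sum_eq_zero_iff_ne_zero]
      have hrc : ringChar F = p := ringChar.eq F p
      obtain ⟨b, hb⟩ : ∃ b : F, zmodTrace p F b ≠ 0 := by
        subst hrc
        obtain ⟨b, hb⟩ := @FiniteField.trace_to_zmod_nondegenerate F _ _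
          (ZMod.algebra F (ringChar F)) 1 one_ne_zero
        refine ⟨b, ?_⟩
        rw [one_mul] at hb
        simpa [zmodTrace] using hb
      intro h0
      have hb1 : ψ b = 1 := by rw [h0]; rfl
      exact eChar_ne_one p hb (by simpa [hψ] using hb1)
    calc ∑ s : F, eChar p (zmodTrace p F (s * t))
        = ∑ s : F, ψ (s * t) := by simp [hψ]
      _ = ∑ s : F, ψ s := Fintype.sum_bijective (· * t)
            (mul_left_injective₀ ht).bijective_of_finite _ _ (fun s => rfl)
      _ = 0 := key

lemma weyl_apply (v : F × F) (x y : F) :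
    weyl p F v x y =
      if y = x - v.1 then eChar p (zmodTrace p F (v.2 * (x - (2 : F)⁻¹ * v.1))) else 0 := rfl

lemma two_ne_zero_of_p (hp2 : p ≠ 2) : (2 : F) ≠ 0 := by
  intro h
  have h1 := (CharP.cast_eq_zero_iff F p 2).mp (by exact_mod_cast h)
  exact hp2 ((Nat.prime_dvd_prime_iff_eq (Fact.out : p.Prime) Nat.prime_two).mp h1)

lemma weyl_mul (hp2 : p ≠ 2) (a b : F × F) :
    weyl p F a * weyl p F b =
      eChar p (zmodTrace p F ((a.2 * b.1 - a.1 * b.2) * (2 : F)⁻¹)) • weyl p F (a + b) := by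
  have h2 : (2 : F) ≠ 0 := two_ne_zero_of_p p F hp2
  ext x y
  rw [Matrix.mul_apply]
  simp only [weyl_apply, Matrix.smul_apply, smul_eq_mul]
  rw [Finset.sum_eq_single (x - a.1)]
  · rw [if_pos rfl]
    by_cases hy : y = x - a.1 - b.1
    · have hy' : y = x - (a + b).1 := by rw [Prod.fst_add, ← sub_sub]; exact hy
      rw [if_pos hy, if_pos hy', ← AddChar.map_add_eq_mul, ← AddChar.map_add_eq_mul,
        ← zmodTrace_add, ← zmodTrace_add]
      congr 1
      congr 1
      simp only [Prod.fst_add, Prod.snd_add]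
      field_simp
      ring
    · have hy' : ¬ y = x - (a + b).1 := by rw [Prod.fst_add, ← sub_sub]; exact hy
      rw [if_neg hy, if_neg hy', mul_zero, mul_zero]
  · intro z _ hz
    rw [if_neg hz, zero_mul]
  · intro h; exact absurd (Finset.mem_univ _) h

lemma weyl_conjTranspose (hp2 : p ≠ 2) (a : F × F) :
    (weyl p F a)ᴴ = weyl p F (-a) := by
  have h2 : (2 : F) ≠ 0 := two_ne_zero_of_p p F hp2
  ext x y
  rw [Matrix.conjTranspose_apply, weyl_apply, weyl_apply]
  by_cases h : y = x + a.1
  · have hx : x = y - a.1 := by rw [h]; ring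
    rw [if_pos hx, if_pos (show y = x - (-a).1 by rw [Prod.fst_neg, sub_neg_eq_add]; exact h),
      eChar_star, ← zmodTrace_neg]
    congr 1
    congr 1
    subst h
    simp only [Prod.snd_neg, Prod.fst_neg]
    linear_combination a.2 * a.1 * inv_mul_cancel₀ h2
  · have hx : ¬ x = y - a.1 := fun hx => h (by rw [hx]; ring)
    rw [if_neg hx, if_neg (show ¬ y = x - (-a).1 by rw [Prod.fst_neg, sub_neg_eq_add]; exact h),
      star_zero]

end Aux

section Main

set_option linter.unusedSectionVars false

variable (p : ℕ) [Fact p.Prime] (F : Type*) [Field F] [Fintype F] [DecidableEq F] [CharP F p]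

lemma weyl_zero : weyl p F 0 = 1 := by
  ext x y
  rw [weyl_apply, Matrix.one_apply]
  by_cases h : x = y
  · rw [if_pos (by rw [h]; simp), if_pos h]
    simp [zmodTrace_zero, AddChar.map_zero_eq_one]
  · rw [if_neg (by simpa [eq_comm] using h), if_neg h]

lemma trace_conj_mul (hp2 : p ≠ 2) (T S : Matrix F F ℂ) (a b : F × F) :
    ((weyl p F a * T * (weyl p F a)ᴴ) * (weyl p F b * S * (weyl p F b)ᴴ)).trace
      = ((weyl p F (a - b) * T * (weyl p F (a - b))ᴴ) * S).trace := by
  have h2 : (2 : F) ≠ 0 := two_ne_zero_of_p p F hp2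
  rw [weyl_conjTranspose p F hp2, weyl_conjTranspose p F hp2, weyl_conjTranspose p F hp2]
  have step1 : ((weyl p F a * T * weyl p F (-a)) * (weyl p F b * S * weyl p F (-b))).trace
      = ((weyl p F (-b) * weyl p F a) * (T * ((weyl p F (-a) * weyl p F b) * S))).trace := by
    rw [show (weyl p F a * T * weyl p F (-a)) * (weyl p F b * S * weyl p F (-b))
        = ((weyl p F a * T * weyl p F (-a)) * (weyl p F b * S)) * weyl p F (-b) by
      simp only [mul_assoc]]
    rw [Matrix.trace_mul_comm]
    congr 1
    simp only [mul_assoc]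
  rw [step1, weyl_mul p F hp2 (-b) a, weyl_mul p F hp2 (-a) b]
  rw [neg_add_eq_sub, neg_add_eq_sub]
  simp only [smul_mul_assoc, Matrix.mul_smul, Matrix.trace_smul, smul_eq_mul, smul_smul]
  rw [← AddChar.map_add_eq_mul, ← zmodTrace_add]
  have harg : ((-b).2 * a.1 - (-b).1 * a.2) * (2:F)⁻¹ + ((-a).2 * b.1 - (-a).1 * b.2) * (2:F)⁻¹
      = 0 := by
    simp only [Prod.fst_neg, Prod.snd_neg]
    ring
  rw [harg, zmodTrace_zero, AddChar.map_zero_eq_one, one_mul]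
  have hba : b - a = -(a - b) := by abel
  rw [hba]
  congr 1
  simp only [mul_assoc]

lemma weyl_entry (T : Matrix F F ℂ) (u : F × F) (x y : F) :
    (weyl p F u * T * (weyl p F u)ᴴ) x y
      = eChar p (zmodTrace p F (u.2 * (x - y))) * T (x - u.1) (y - u.1) := by
  have h1 : ∀ z : F, (weyl p F u * T) x z
      = eChar p (zmodTrace p F (u.2 * (x - (2:F)⁻¹ * u.1))) * T (x - u.1) z := by
    intro z
    rw [Matrix.mul_apply, Finset.sum_eq_single (x - u.1)]
    · rw [weyl_apply, if_pos rfl]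
    · intro w _ hw
      rw [weyl_apply, if_neg hw, zero_mul]
    · intro h; exact absurd (Finset.mem_univ _) h
  rw [Matrix.mul_apply, Finset.sum_eq_single (y - u.1)]
  · rw [h1, Matrix.conjTranspose_apply, weyl_apply, if_pos rfl, eChar_star, ← zmodTrace_neg,
      mul_comm _ (T _ _), mul_assoc, ← AddChar.map_add_eq_mul, ← zmodTrace_add]
    rw [show u.2 * (x - (2:F)⁻¹ * u.1) + -(u.2 * (y - (2:F)⁻¹ * u.1)) = u.2 * (x - y) by ring]
    ring
  · intro z _ hz
    rw [Matrix.conjTranspose_apply, weyl_apply, if_neg hz, star_zero, mul_zero]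
  · intro h; exact absurd (Finset.mem_univ _) h

lemma sum_weyl_conj (T : Matrix F F ℂ) :
    ∑ u : F × F, weyl p F u * T * (weyl p F u)ᴴ
      = ((Fintype.card F : ℂ) * T.trace) • (1 : Matrix F F ℂ) := by
  ext x y
  rw [Matrix.sum_apply]
  simp only [weyl_entry]
  rw [Fintype.sum_prod_type]
  have hinner : ∀ u1 : F, ∑ u2 : F,
      eChar p (zmodTrace p F (u2 * (x - y))) * T (x - u1) (y - u1)
      = (if x - y = 0 then (Fintype.card F : ℂ) else 0) * T (x - u1) (y - u1) := by
    intro u1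
    rw [← Finset.sum_mul, sum_eChar_trace]
  simp only [hinner]
  by_cases hxy : x = y
  · subst hxy
    simp only [sub_self, if_pos rfl, Matrix.smul_apply, Matrix.one_apply_eq, smul_eq_mul,
      mul_one]
    rw [← Finset.mul_sum]
    congr 1
    rw [Matrix.trace]
    exact Fintype.sum_bijective (fun u1 : F => x - u1)
      sub_right_injective.bijective_of_finite
      (fun u1 => T (x - u1) (x - u1)) (fun i => T.diag i) (fun u1 => rfl)
  · rw [if_neg (fun h => hxy (by rwa [sub_eq_zero] at h))]
    simp [Matrix.one_apply_ne hxy]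

end Main

theorem stmt18 (p : ℕ) [Fact p.Prime] (hp2 : p ≠ 2) (F : Type*) [Field F] [Fintype F]
    [DecidableEq F] [CharP F p] (T : Matrix F F ℂ) (hT : T.PosSemidef) (hTtr : T.trace = 1)
    (L L' : Submodule F (F × F)) (hL : Module.finrank F L = 1) (hL' : Module.finrank F L' = 1)
    (hLL' : L ≠ L') (v w : F × F) :
    ((phaseObsMarginal p F T L v) * (phaseObsMarginal p F T L' w)).trace =
      1 / (Fintype.card F : ℂ) := by
  classical
  have hq : (Fintype.card F : ℂ) ≠ 0 := Nat.cast_ne_zero.mpr Fintype.card_ne_zero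
  -- L and L' are complementary
  have hdisj : L ⊓ L' = ⊥ := by
    by_contra hne
    have hle : Module.finrank F ↥(L ⊓ L') ≤ 1 := hL ▸ Submodule.finrank_mono inf_le_left
    have hge : 1 ≤ Module.finrank F ↥(L ⊓ L') := by
      rw [Nat.one_le_iff_ne_zero]
      intro h0
      exact hne (Submodule.finrank_eq_zero.mp h0)
    have h1 : Module.finrank F ↥(L ⊓ L') = 1 := le_antisymm hle hge
    have e1 : L ⊓ L' = L := Submodule.eq_of_le_of_finrank_eq inf_le_left (h1.trans hL.symm)
    have e2 : L ⊓ L' = L' := Submodule.eq_of_le_of_finrank_eq inf_le_right (h1.trans hL'.symm)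
    exact hLL' (e1.symm.trans e2)
  have hVdim : Module.finrank F (F × F) = 2 := by
    rw [Module.finrank_prod, Module.finrank_self]
  have hcodis : L ⊔ L' = ⊤ := by
    apply Submodule.eq_top_of_finrank_eq
    have hsum := Submodule.finrank_sup_add_finrank_inf_eq L L'
    rw [hdisj, hL, hL', finrank_bot, add_zero] at hsum
    rw [hsum, hVdim]
  have hcompl : IsCompl L L' := ⟨disjoint_iff.mpr hdisj, codisjoint_iff.mpr hcodis⟩
  set q : ℂ := (Fintype.card F : ℂ) with hqdef
  set f : F × F → ℂ := fun u => ((weyl p F u * T * (weyl p F u)ᴴ) * T).trace with hf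
  -- termwise reduction
  have hterm : ∀ lx ly : F × F,
      ((if lx ∈ L then phaseObs p F T (v + lx) else 0) *
        (if ly ∈ L' then phaseObs p F T (w + ly) else 0)).trace
      = if ly ∈ L' then (if lx ∈ L then 1 / q * (1 / q) * f ((v + lx) - (w + ly)) else 0)
          else 0 := by
    intro lx ly
    split_ifs with h1 h1'
    · rw [phaseObs, phaseObs, Matrix.smul_mul, Matrix.mul_smul, Matrix.trace_smul,
        Matrix.trace_smul, trace_conj_mul p F hp2 T T, smul_eq_mul, smul_eq_mul, hf]
      ring
    all_goals simp
  -- expand the product of the two marginal sums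
  rw [phaseObsMarginal, phaseObsMarginal, Finset.sum_mul]
  simp only [Finset.mul_sum]
  rw [Matrix.trace_sum]
  simp only [Matrix.trace_sum]
  simp only [hterm]
  -- convert the `if`-sums to sums over the submodules
  have conv1 : ∀ (g : F × F → ℂ),
      (∑ l : F × F, if l ∈ L then g l else 0) = ∑ x : L, g x := by
    intro g
    rw [← Finset.sum_filter]
    exact Finset.sum_subtype _ (by simp) g
  have conv2 : ∀ (g : F × F → ℂ),
      (∑ l : F × F, if l ∈ L' then g l else 0) = ∑ x : L', g x := by
    intro g
    rw [← Finset.sum_filter]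
    exact Finset.sum_subtype _ (by simp) g
  simp only [conv2]
  rw [Finset.sum_comm]
  simp only [conv1]
  -- reindex over all of F × F
  set Φ : (↥L' × ↥L) ≃ (F × F) :=
    (Equiv.prodComm ↥L' ↥L).trans
      (((Equiv.refl ↥L).prodCongr (Equiv.neg ↥L')).trans
        ((Submodule.prodEquivOfIsCompl L L' hcompl).toEquiv.trans (Equiv.addLeft (v - w))))
    with hΦ
  rw [← Fintype.sum_prod_type
    (f := fun z : ↥L' × ↥L => 1 / q * (1 / q) * f ((v + ↑z.2) - (w + ↑z.1)))]
  have key : ∀ z : ↥L' × ↥L, (v + (↑z.2 : F × F)) - (w + ↑z.1) = Φ z := by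
    intro z
    rw [hΦ]
    simp only [Equiv.trans_apply, Equiv.prodComm_apply, Equiv.prodCongr_apply,
      Equiv.coe_refl, Equiv.neg_apply, Prod.map, Prod.swap, id_eq,
      LinearEquiv.coe_toEquiv, Equiv.coe_addLeft, Submodule.coe_prodEquivOfIsCompl']
    push_cast
    abel
  rw [Fintype.sum_equiv Φ _ (fun u : F × F => 1 / q * (1 / q) * f u)
    (fun z => by rw [key z])]
  -- final evaluation of the full phase-space sum
  rw [← Finset.mul_sum, hf]
  rw [← Matrix.trace_sum, ← Finset.sum_mul, sum_weyl_conj, Matrix.smul_mul, one_mul,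
    Matrix.trace_smul, hTtr, mul_one, smul_eq_mul, mul_one]
  field_simp
  exact hqdef.symm
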